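/- For positive semidefinite n×n matrices A, B, a contraction Z (i.e., Z*Z ≤ I), and integer p ≥ 1, the largest eigenvalue of (A Z* B Z A)^p is at most the largest eigenvalue of A^p Z* B^p Z A^p. -/

import Mathlib

open Matrix ComplexOrder

/-- The absolute value `|M| = (Mᴴ M)^{1/2}` of a complex matrix. -/
noncomputable def matAbs {n : ℕ} (M : Matrix (Fin n) (Fin n) ℂ) : Matrix (Fin n) (Fin n) ℂ :=
  ((Matrix.posSemidef_conjTranspose_mul_self M).1.eigenvectorUnitary : Matrix (Fin n) (Fin n) ℂ) *
    Matrix.diagonal ((↑) ∘ Real.sqrt ∘ (Matrix.posSemidef_conjTranspose_mul_self M).1.eigenvalues) *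
    (star (Matrix.posSemidef_conjTranspose_mul_self M).1.eigenvectorUnitary : Matrix (Fin n) (Fin n) ℂ)

theorem matAbs_posSemidef {n : ℕ} (M : Matrix (Fin n) (Fin n) ℂ) : (matAbs M).PosSemidef :=
  by
    unfold matAbs
    rw [Matrix.star_eq_conjTranspose]
    apply Matrix.PosSemidef.mul_mul_conjTranspose_same
    rw [Matrix.posSemidef_diagonal_iff]
    intro i
    simp only [Function.comp_apply, Complex.zero_le_real]
    exact Real.sqrt_nonneg _

/-- Eigenvalues of a Hermitian matrix arranged in decreasing order:
`eigDesc hM j` is the `j`-th largest eigenvalue. -/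
noncomputable def eigDesc {n : ℕ} {M : Matrix (Fin n) (Fin n) ℂ} (hM : M.IsHermitian) :
    Fin n → ℝ :=
  fun i => hM.eigenvalues (Tuple.sort hM.eigenvalues i.rev)

/-- Eigenvalues of a Hermitian matrix arranged in increasing order. -/
noncomputable def eigAsc {n : ℕ} {M : Matrix (Fin n) (Fin n) ℂ} (hM : M.IsHermitian) :
    Fin n → ℝ :=
  fun i => hM.eigenvalues (Tuple.sort hM.eigenvalues i)

/-- The largest eigenvalue of a Hermitian matrix. -/
noncomputable def maxEig {n : ℕ} {M : Matrix (Fin n) (Fin n) ℂ} (hM : M.IsHermitian) : ℝ :=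
  ⨆ i, hM.eigenvalues i

/-- Real power `M^t` of a Hermitian matrix, via the spectral decomposition. -/
noncomputable def rpowH {n : ℕ} {M : Matrix (Fin n) (Fin n) ℂ} (hM : M.IsHermitian) (t : ℝ) :
    Matrix (Fin n) (Fin n) ℂ :=
  (hM.eigenvectorUnitary : Matrix (Fin n) (Fin n) ℂ) *
    Matrix.diagonal (fun i => ((hM.eigenvalues i ^ t : ℝ) : ℂ)) *
    star (hM.eigenvectorUnitary : Matrix (Fin n) (Fin n) ℂ)

theorem rpowH_isHermitian {n : ℕ} {M : Matrix (Fin n) (Fin n) ℂ} (hM : M.IsHermitian) (t : ℝ) :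
    (rpowH hM t).IsHermitian := by
  unfold rpowH
  unfold Matrix.IsHermitian
  simp [Matrix.conjTranspose_mul, Matrix.diagonal_conjTranspose, mul_assoc,
    Matrix.star_eq_conjTranspose]
  congr 2
  funext i
  simp [star]
  rfl

/-- The ℓ²→ℓ² operator norm of a complex matrix. -/
noncomputable def opN {n : ℕ} (M : Matrix (Fin n) (Fin n) ℂ) : ℝ :=
  ‖Matrix.toEuclideanCLM (𝕜 := ℂ) M‖

open scoped NNReal ENNReal

section Aux

open scoped MatrixOrder in
lemma psd_sqrt_posSemidef {n : ℕ} {M : Matrix (Fin n) (Fin n) ℂ} (hM : M.PosSemidef) :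
    (CFC.sqrt M).PosSemidef :=
  Matrix.nonneg_iff_posSemidef.mp (CFC.sqrt_nonneg M)

open scoped MatrixOrder in
lemma psd_sqrt_mul_self {n : ℕ} {M : Matrix (Fin n) (Fin n) ℂ} (hM : M.PosSemidef) :
    CFC.sqrt M * CFC.sqrt M = M :=
  CFC.sqrt_mul_sqrt_self M (Matrix.nonneg_iff_posSemidef.mpr hM)

lemma biSup_nnnorm_eq_of_diff {s t : Set ℂ} (h : s \ {0} = t \ {0}) :
    (⨆ k ∈ s, (‖k‖₊ : ℝ≥0∞)) = ⨆ k ∈ t, (‖k‖₊ : ℝ≥0∞) := by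
  have key : ∀ (s t : Set ℂ), s \ {0} = t \ {0} →
      (⨆ k ∈ s, (‖k‖₊ : ℝ≥0∞)) ≤ ⨆ k ∈ t, (‖k‖₊ : ℝ≥0∞) := by
    intro s t h
    refine iSup₂_le fun k hk => ?_
    by_cases hk0 : k = 0
    · simp [hk0]
    · have hkt : k ∈ t := by
        have h1 : k ∈ s \ {0} := ⟨hk, hk0⟩
        rw [h] at h1
        exact h1.1
      exact le_iSup₂ (f := fun k (_ : k ∈ t) => (‖k‖₊ : ℝ≥0∞)) k hkt
  exact le_antisymm (key _ _ h) (key _ _ h.symm)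

lemma spectralRadius_mul_comm' {𝔄 : Type*} [NormedRing 𝔄] [NormedAlgebra ℂ 𝔄] (x y : 𝔄) :
    spectralRadius ℂ (x * y) = spectralRadius ℂ (y * x) := by
  unfold spectralRadius
  exact biSup_nnnorm_eq_of_diff (spectrum.nonzero_mul_comm x y)

lemma key_step {𝔄 : Type*} [CStarAlgebra 𝔄] [Nontrivial 𝔄] (a c z : 𝔄)
    (ha : IsSelfAdjoint a) (hc : IsSelfAdjoint c) (k : ℕ) :
    ‖c ^ (k+1) * z * a ^ (k+1)‖ ^ 2 ≤ ‖c ^ (k+2) * z * a ^ (k+2)‖ * ‖c ^ k * z * a ^ k‖ := by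
  set w : ℕ → 𝔄 := fun j => c ^ j * z * a ^ j with hw
  have hstar : ∀ j, star (w j) = a ^ j * star z * c ^ j := by
    intro j
    simp [hw, StarMul.star_mul, (ha.pow j).star_eq, (hc.pow j).star_eq, mul_assoc]
  have e1 : w (k+1) * star (w (k+1)) = (c^(k+1) * z) * (a^(2*k+2) * star z * c^(k+1)) := by
    have pa : a^(2*k+2) = a^(k+1) * a^(k+1) := by
      rw [show 2*k+2 = (k+1)+(k+1) from by ring, pow_add]
    rw [hstar, pa]
    simp only [hw, mul_assoc]
  have e2 : (a^(2*k+2) * star z * c^(k+1)) * (c^(k+1) * z) =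
      a^k * ((a^(k+2) * star z * c^(2*k+2)) * z) := by
    have pa : a^(2*k+2) = a^k * a^(k+2) := by
      rw [show 2*k+2 = k+(k+2) from by ring, pow_add]
    have pc : c^(2*k+2) = c^(k+1) * c^(k+1) := by
      rw [show 2*k+2 = (k+1)+(k+1) from by ring, pow_add]
    rw [pa, pc]
    simp only [mul_assoc]
  have e3 : ((a^(k+2) * star z * c^(2*k+2)) * z) * a^k = star (w (k+2)) * w k := by
    have pc : c^(2*k+2) = c^(k+2) * c^k := by
      rw [show 2*k+2 = (k+2)+k from by ring, pow_add]
    rw [hstar, pc]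
    simp only [hw, mul_assoc]
  have step : (↑(‖w (k+1)‖₊ * ‖w (k+1)‖₊) : ℝ≥0∞) ≤ (↑(‖w (k+2)‖₊ * ‖w k‖₊) : ℝ≥0∞) := by
    calc (↑(‖w (k+1)‖₊ * ‖w (k+1)‖₊) : ℝ≥0∞)
        = (↑(‖star (w (k+1)) * w (k+1)‖₊) : ℝ≥0∞) := by rw [CStarRing.nnnorm_star_mul_self]
      _ = spectralRadius ℂ (star (w (k+1)) * w (k+1)) :=
          (IsSelfAdjoint.spectralRadius_eq_nnnorm (IsSelfAdjoint.star_mul_self (w (k+1)))).symm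
      _ = spectralRadius ℂ (w (k+1) * star (w (k+1))) := spectralRadius_mul_comm' _ _
      _ = spectralRadius ℂ ((c^(k+1) * z) * (a^(2*k+2) * star z * c^(k+1))) := by rw [e1]
      _ = spectralRadius ℂ ((a^(2*k+2) * star z * c^(k+1)) * (c^(k+1) * z)) :=
          spectralRadius_mul_comm' _ _
      _ = spectralRadius ℂ (a^k * ((a^(k+2) * star z * c^(2*k+2)) * z)) := by rw [e2]
      _ = spectralRadius ℂ (((a^(k+2) * star z * c^(2*k+2)) * z) * a^k) :=
          spectralRadius_mul_comm' _ _
      _ = spectralRadius ℂ (star (w (k+2)) * w k) := by rw [e3]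
      _ ≤ (↑(‖star (w (k+2)) * w k‖₊) : ℝ≥0∞) := spectrum.spectralRadius_le_nnnorm _
      _ ≤ (↑(‖w (k+2)‖₊ * ‖w k‖₊) : ℝ≥0∞) := by
          rw [ENNReal.coe_le_coe, ← nnnorm_star (w (k+2))]
          exact nnnorm_mul_le _ _
  rw [ENNReal.coe_le_coe] at step
  have := NNReal.coe_le_coe.mpr step
  simpa [pow_two] using this

lemma clm_nonneg {n : ℕ} {M : Matrix (Fin n) (Fin n) ℂ} (hM : M.PosSemidef) :
    0 ≤ Matrix.toEuclideanCLM (𝕜 := ℂ) M := by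
  rw [← psd_sqrt_mul_self hM, _root_.map_mul]
  nth_rewrite 1 [← (psd_sqrt_posSemidef hM).1]
  rw [← Matrix.star_eq_conjTranspose, map_star]
  exact star_mul_self_nonneg _

set_option maxHeartbeats 1000000 in
set_option synthInstance.maxHeartbeats 200000 in
lemma maxEig_eq_norm {n : ℕ} (hn : 0 < n) {M : Matrix (Fin n) (Fin n) ℂ}
    (hM : M.PosSemidef) (h : M.IsHermitian) :
    maxEig h = ‖Matrix.toEuclideanCLM (𝕜 := ℂ) M‖ := by
  haveI : Nonempty (Fin n) := ⟨⟨0, hn⟩⟩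
  haveI : Nontrivial (EuclideanSpace ℂ (Fin n)) := inferInstance
  haveI : Nontrivial (EuclideanSpace ℂ (Fin n) →L[ℂ] EuclideanSpace ℂ (Fin n)) := by
    obtain ⟨x, hx⟩ := exists_ne (0 : EuclideanSpace ℂ (Fin n))
    refine ⟨1, 0, fun hc => hx ?_⟩
    have := congrArg (fun T => T x) hc
    simpa using this
  have hspec : spectrum ℝ (Matrix.toEuclideanCLM (𝕜 := ℂ) M) = spectrum ℝ M := by
    rw [← spectrum.preimage_algebraMap (S := ℂ) (R := ℝ)
          (a := Matrix.toEuclideanCLM (𝕜 := ℂ) M),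
        ← spectrum.preimage_algebraMap (S := ℂ) (R := ℝ) (a := M),
        AlgEquiv.spectrum_eq (Matrix.toEuclideanCLM (𝕜 := ℂ) (n := Fin n))]
  have hnn : 0 ≤ Matrix.toEuclideanCLM (𝕜 := ℂ) M := clm_nonneg hM
  have hmem : ‖Matrix.toEuclideanCLM (𝕜 := ℂ) M‖ ∈ spectrum ℝ M := by
    rw [← hspec]
    exact CStarAlgebra.norm_mem_spectrum_of_nonneg hnn
  rw [h.spectrum_real_eq_range_eigenvalues] at hmem
  obtain ⟨i, hi⟩ := hmem
  apply le_antisymm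
  · apply ciSup_le
    intro j
    have hj : h.eigenvalues j ∈ spectrum ℝ (Matrix.toEuclideanCLM (𝕜 := ℂ) M) := by
      rw [hspec, h.spectrum_real_eq_range_eigenvalues]
      exact ⟨j, rfl⟩
    exact (Real.le_norm_self _).trans (spectrum.norm_le_norm_of_mem hj)
  · rw [← hi]
    exact le_ciSup (Set.Finite.bddAbove (Set.finite_range _)) i

end Aux


set_option maxHeartbeats 1000000 in
theorem stmt_1 {n : ℕ} (A B Z : Matrix (Fin n) (Fin n) ℂ)
    (hA : A.PosSemidef) (hB : B.PosSemidef) (hZ : ((1 : Matrix (Fin n) (Fin n) ℂ) - Zᴴ * Z).PosSemidef)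
    (p : ℕ) (hp : 1 ≤ p)
    (h1 : ((A * Zᴴ * B * Z * A) ^ p).IsHermitian)
    (h2 : (A ^ p * Zᴴ * B ^ p * Z * A ^ p).IsHermitian) :
    maxEig h1 ≤ maxEig h2 := by
  rcases Nat.eq_zero_or_pos n with hn | hn
  · subst hn
    unfold maxEig
    rw [Real.iSup_of_isEmpty, Real.iSup_of_isEmpty]
  · haveI : Nonempty (Fin n) := ⟨⟨0, hn⟩⟩
    haveI : Nontrivial (EuclideanSpace ℂ (Fin n)) := inferInstance
    haveI : Nontrivial (EuclideanSpace ℂ (Fin n) →L[ℂ] EuclideanSpace ℂ (Fin n)) := by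
      obtain ⟨x, hx⟩ := exists_ne (0 : EuclideanSpace ℂ (Fin n))
      refine ⟨1, 0, fun hc => hx ?_⟩
      have := congrArg (fun T => T x) hc
      simpa using this
    open scoped MatrixOrder in
    set C : Matrix (Fin n) (Fin n) ℂ := CFC.sqrt B with hCdef
    have hCps : C.PosSemidef := psd_sqrt_posSemidef hB
    have hCC : C * C = B := psd_sqrt_mul_self hB
    set T := Matrix.toEuclideanCLM (𝕜 := ℂ) (n := Fin n) with hT
    have ha : _root_.IsSelfAdjoint (T A) := by
      have h' : star (T A) = T A := by rw [← map_star, Matrix.star_eq_conjTranspose, hA.1]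
      exact h'
    have hc : _root_.IsSelfAdjoint (T C) := by
      have h' : star (T C) = T C := by rw [← map_star, Matrix.star_eq_conjTranspose, hCps.1]
      exact h'
    set S : ℕ → ℝ := fun k => ‖(T C)^k * T Z * (T A)^k‖ with hS
    have S_nonneg : ∀ k, 0 ≤ S k := fun k => norm_nonneg _
    have key : ∀ k, S (k+1)^2 ≤ S (k+2) * S k := fun k => key_step (T A) (T C) (T Z) ha hc k
    -- S 0 ≤ 1
    have S0 : S 0 ≤ 1 := by
      have hz1 : star (T Z) * T Z ≤ 1 := by
        have h0 : 0 ≤ T (1 - Zᴴ * Z) := clm_nonneg hZ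
        rw [map_sub, _root_.map_one, _root_.map_mul, ← Matrix.star_eq_conjTranspose,
          map_star, sub_nonneg] at h0
        exact h0
      have hz0 : (0 : EuclideanSpace ℂ (Fin n) →L[ℂ] EuclideanSpace ℂ (Fin n))
          ≤ star (T Z) * T Z := star_mul_self_nonneg _
      have hnorm : ‖star (T Z) * T Z‖ ≤ ‖(1 : EuclideanSpace ℂ (Fin n) →L[ℂ]
          EuclideanSpace ℂ (Fin n))‖ := CStarAlgebra.norm_le_norm_of_nonneg_of_le hz0 hz1
      rw [norm_one] at hnorm
      have heq := CStarRing.norm_star_mul_self (x := T Z)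
      have hSz : S 0 = ‖T Z‖ := by
        simp [hS, pow_zero, one_mul, mul_one]
      rw [hSz]
      nlinarith [norm_nonneg (T Z), hnorm, heq]
    -- S 1 * S k ≤ S (k + 1)
    have step2 : ∀ k, S 1 * S k ≤ S (k+1) := by
      intro k
      induction k with
      | zero =>
        calc S 1 * S 0 ≤ S 1 * 1 := mul_le_mul_of_nonneg_left S0 (S_nonneg 1)
          _ = S 1 := mul_one _
      | succ m ih =>
        by_cases h0 : S (m+1) = 0
        · rw [h0, mul_zero]
          exact S_nonneg _
        · have hpos : 0 < S (m+1) := lt_of_le_of_ne (S_nonneg _) (Ne.symm h0)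
          have hmul : (S 1 * S (m+1)) * S (m+1) ≤ S (m+2) * S (m+1) := by
            calc (S 1 * S (m+1)) * S (m+1) = S 1 * S (m+1)^2 := by ring
              _ ≤ S 1 * (S (m+2) * S m) :=
                  mul_le_mul_of_nonneg_left (key m) (S_nonneg 1)
              _ = S (m+2) * (S 1 * S m) := by ring
              _ ≤ S (m+2) * S (m+1) := mul_le_mul_of_nonneg_left ih (S_nonneg _)
          exact le_of_mul_le_mul_right hmul hpos
    -- S 1 ^ p ≤ S p
    have step3 : ∀ q, 1 ≤ q → S 1 ^ q ≤ S q := by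
      intro q hq
      induction q, hq using Nat.le_induction with
      | base => rw [pow_one]
      | succ m hm ih =>
        calc S 1 ^ (m+1) = S 1 * S 1 ^ m := by ring
          _ ≤ S 1 * S m := mul_le_mul_of_nonneg_left ih (S_nonneg 1)
          _ ≤ S (m+1) := step2 m
    -- PSD facts
    have hM1 : (A * Zᴴ * B * Z * A).PosSemidef := by
      have h := hB.conjTranspose_mul_mul_same (Z * A)
      have e : (Z * A)ᴴ * B * (Z * A) = A * Zᴴ * B * Z * A := by
        rw [conjTranspose_mul, hA.1]
        simp only [mul_assoc]
      rwa [e] at h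
    have hM2 : (A ^ p * Zᴴ * B ^ p * Z * A ^ p).PosSemidef := by
      have h := (hB.pow p).conjTranspose_mul_mul_same (Z * A ^ p)
      have e : (Z * A ^ p)ᴴ * B ^ p * (Z * A ^ p) = A ^ p * Zᴴ * B ^ p * Z * A ^ p := by
        rw [conjTranspose_mul, (hA.1.pow p)]
        simp only [mul_assoc]
      rwa [e] at h
    -- matrix factorizations
    have fact1 : A * Zᴴ * B * Z * A = (C * Z * A)ᴴ * (C * Z * A) := by
      rw [conjTranspose_mul, conjTranspose_mul, hA.1, hCps.1, ← hCC]
      simp only [mul_assoc]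
    have factB : B ^ p = C ^ p * C ^ p := by
      rw [← hCC, ← pow_two, ← pow_mul, ← pow_add]
      congr 1
      ring
    have fact2 : A ^ p * Zᴴ * B ^ p * Z * A ^ p = (C ^ p * Z * A ^ p)ᴴ * (C ^ p * Z * A ^ p) := by
      rw [conjTranspose_mul, conjTranspose_mul, (hA.1.pow p), (hCps.1.pow p), factB]
      simp only [mul_assoc]
    -- norm identities
    have eq1 : ‖T (A * Zᴴ * B * Z * A)‖ = S 1 ^ 2 := by
      have hfac : T (A * Zᴴ * B * Z * A) = star (T (C * Z * A)) * T (C * Z * A) := by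
        rw [fact1, _root_.map_mul, ← Matrix.star_eq_conjTranspose, map_star]
      have hS1 : S 1 = ‖T (C * Z * A)‖ := by simp [hS, pow_one, _root_.map_mul]
      rw [hfac, CStarRing.norm_star_mul_self (x := T (C * Z * A)), hS1, pow_two]
    have eq2 : ‖T (A ^ p * Zᴴ * B ^ p * Z * A ^ p)‖ = S p ^ 2 := by
      have hfac : T (A ^ p * Zᴴ * B ^ p * Z * A ^ p)
          = star (T (C ^ p * Z * A ^ p)) * T (C ^ p * Z * A ^ p) := by
        rw [fact2, _root_.map_mul, ← Matrix.star_eq_conjTranspose, map_star]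
      have hSp : S p = ‖T (C ^ p * Z * A ^ p)‖ := by simp [hS, _root_.map_mul, map_pow]
      rw [hfac, CStarRing.norm_star_mul_self (x := T (C ^ p * Z * A ^ p)), hSp, pow_two]
    -- final chain
    have final : maxEig h1 ≤ maxEig h2 := by
      rw [maxEig_eq_norm hn (hM1.pow p) h1, maxEig_eq_norm hn hM2 h2]
      calc ‖T ((A * Zᴴ * B * Z * A) ^ p)‖ = ‖(T (A * Zᴴ * B * Z * A)) ^ p‖ := by rw [map_pow]
        _ ≤ ‖T (A * Zᴴ * B * Z * A)‖ ^ p := norm_pow_le' _ (Nat.lt_of_lt_of_le Nat.zero_lt_one hp)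
        _ = (S 1 ^ p) ^ 2 := by rw [eq1]; ring
        _ ≤ (S p) ^ 2 := by
            have h0 : 0 ≤ S 1 ^ p := pow_nonneg (S_nonneg 1) p
            nlinarith [step3 p hp, S_nonneg p]
        _ = ‖T (A ^ p * Zᴴ * B ^ p * Z * A ^ p)‖ := by rw [eq2]
    exact final
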